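/- If G is a non-complete double-critical k-chromatic graph, then for every vertex x of G there exists a neighbour y of x such that the set A(xy) = N(x) \ N[y] is non-empty, i.e. some neighbour of x is distinct from y and not adjacent to y. -/

import Mathlib

open SimpleGraph

/-- A graph is vertex-critical if deleting any vertex decreases the chromatic number. -/
def VertexCritical {V : Type} (G : SimpleGraph V) : Prop :=
  ∀ v : V, (G.induce ({v}ᶜ : Set V)).chromaticNumber < G.chromaticNumber

/-- A vertex-critical graph is double-critical if deleting the two end-vertices of any
edge decreases the chromatic number by at least two. -/
def DoubleCritical {V : Type} (G : SimpleGraph V) : Prop :=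
  VertexCritical G ∧
  ∀ x y : V, G.Adj x y →
    (G.induce ({x, y}ᶜ : Set V)).chromaticNumber + 2 ≤ G.chromaticNumber


lemma extend_coloring {V : Type} [Fintype V] (G : SimpleGraph V) [DecidableRel G.Adj]
    (x : V) (m : ℕ) (h : (G.induce ({x}ᶜ : Set V)).Colorable m)
    (hm : G.degree x < m) : G.Colorable m := by
  classical
  obtain ⟨C⟩ := h
  have hmem : ∀ w, G.Adj x w → (w : V) ∈ ({x}ᶜ : Set V) := fun w hw => by
    simp [hw.ne']
  set t : Finset (Fin m) := (G.neighborFinset x).attach.image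
    (fun w => C ⟨w.1, hmem w.1 ((G.mem_neighborFinset x w.1).mp w.2)⟩) with ht
  have htcard : t.card < m := by
    calc t.card ≤ (G.neighborFinset x).attach.card := Finset.card_image_le
    _ = G.degree x := by rw [Finset.card_attach]; rfl
    _ < m := hm
  have : tᶜ.Nonempty := Finset.card_pos.mp (by simp [Finset.card_compl]; omega)
  obtain ⟨a, ha⟩ := this
  rw [Finset.mem_compl] at ha
  refine ⟨Coloring.mk (fun v => if h : v = x then a else C ⟨v, h⟩) ?_⟩
  intro v w hvw heq
  by_cases hv : v = x
  · have hw : ¬ w = x := fun h => hvw.ne (hv.trans h.symm)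
    rw [dif_pos hv, dif_neg hw] at heq
    refine ha ?_
    rw [heq]
    exact Finset.mem_image_of_mem _
      (Finset.mem_attach _ ⟨w, by rw [SimpleGraph.mem_neighborFinset]; rwa [hv] at hvw⟩)
  · by_cases hw : w = x
    · rw [dif_neg hv, dif_pos hw] at heq
      refine ha ?_
      rw [← heq]
      exact Finset.mem_image_of_mem _
        (Finset.mem_attach _ ⟨v, by rw [SimpleGraph.mem_neighborFinset]; rw [hw] at hvw; exact hvw.symm⟩)
    · rw [dif_neg hv, dif_neg hw] at heq
      exact C.valid (by simpa using hvw) heq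

/-- In a non-complete double-critical `k`-chromatic graph `G`, every vertex `x` has a
neighbour `y` such that `A(xy) = N(x) \ N[y]` is non-empty: some neighbour `z` of `x` is
distinct from `y` and not adjacent to `y`. -/

theorem stmt4 {V : Type} [Fintype V] (G : SimpleGraph V) (k : ℕ)
    (hnc : G ≠ ⊤) (hdc : DoubleCritical G) (hchrom : G.chromaticNumber = k) (x : V) :
    ∃ y : V, G.Adj x y ∧ ∃ z : V, G.Adj x z ∧ z ≠ y ∧ ¬ G.Adj y z := by
  classical
  by_contra hcon
  push_neg at hcon
  obtain ⟨hvc, -⟩ := hdc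
  -- Step 1: k ≤ degree x + 1
  have hx := hvc x
  rw [hchrom] at hx
  have hne : (G.induce ({x}ᶜ : Set V)).chromaticNumber ≠ ⊤ := ne_top_of_lt hx
  set n : ℕ := (G.induce ({x}ᶜ : Set V)).chromaticNumber.toNat with hn
  have hEn : ((n : ℕ∞)) = (G.induce ({x}ᶜ : Set V)).chromaticNumber := ENat.coe_toNat hne
  have hnk : n < k := by
    rw [← hEn] at hx
    exact_mod_cast hx
  have hcoln : (G.induce ({x}ᶜ : Set V)).Colorable n :=
    chromaticNumber_le_iff_colorable.mp (le_of_eq hEn.symm)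
  have hGm : G.Colorable (max n (G.degree x + 1)) :=
    extend_coloring G x _ (hcoln.mono (le_max_left _ _))
      (lt_of_lt_of_le (Nat.lt_succ_self _) (le_max_right _ _))
  have hk1 : k ≤ G.degree x + 1 := by
    by_contra hlt
    push_neg at hlt
    have hmk : max n (G.degree x + 1) < k := max_lt hnk hlt
    have h2 := hGm.chromaticNumber_le
    rw [hchrom] at h2
    have : k ≤ max n (G.degree x + 1) := by exact_mod_cast h2
    omega
  -- Step 2: N[x] is a clique
  have hclq : G.IsClique (insert x (G.neighborSet x)) := by
    intro a ha b hb hab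
    simp only [Set.mem_insert_iff, mem_neighborSet] at ha hb
    rcases ha with rfl | ha
    · rcases hb with rfl | hb
      · exact absurd rfl hab
      · exact hb
    · rcases hb with rfl | hb
      · exact ha.symm
      · exact hcon a ha b hb (Ne.symm hab)
  by_cases hall : ∀ v, v ≠ x → G.Adj x v
  · apply hnc
    ext a b
    simp only [top_adj]
    constructor
    · exact fun h => h.ne
    · intro hab
      by_cases hax : a = x
      · subst hax
        exact hall b (Ne.symm hab)
      · by_cases hbx : b = x
        · subst hbx
          exact (hall a hax).symm
        · exact hcon a (hall a hax) b (hall b hbx) (Ne.symm hab)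
  · push_neg at hall
    obtain ⟨u, hux, hxu⟩ := hall
    have hu := hvc u
    rw [hchrom] at hu
    set sF : Finset V := insert x (G.neighborFinset x) with hsF
    have hsub : ∀ v ∈ sF, v ∈ ({u}ᶜ : Set V) := by
      intro v hv
      simp only [hsF, Finset.mem_insert, mem_neighborFinset] at hv
      simp only [Set.mem_compl_iff, Set.mem_singleton_iff]
      rcases hv with rfl | hv
      · exact Ne.symm hux
      · rintro rfl
        exact hxu hv
    set tF : Finset ({u}ᶜ : Set V) := sF.attach.map
      ⟨fun w => ⟨w.1, hsub w.1 w.2⟩, fun p q h => Subtype.ext (congrArg Subtype.val h : (p:V) = q)⟩ with htF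
    have htmem : ∀ a : ({u}ᶜ : Set V), a ∈ tF → (a : V) ∈ insert x (G.neighborSet x) := by
      intro a ha
      simp only [htF, Finset.mem_map, Finset.mem_attach, true_and,
        Function.Embedding.coeFn_mk] at ha
      obtain ⟨w, hw⟩ := ha
      have : (a : V) = (w : V) := by rw [← hw]; rfl
      rw [this]
      have := w.2
      simp only [hsF, Finset.mem_insert, mem_neighborFinset] at this
      simpa [Set.mem_insert_iff, mem_neighborSet] using this
    have htcard : tF.card = G.degree x + 1 := by
      rw [Finset.card_map, Finset.card_attach, hsF,
        Finset.card_insert_of_notMem (by simp)]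
      rfl
    have hclq' : (G.induce ({u}ᶜ : Set V)).IsClique (tF : Set ({u}ᶜ : Set V)) := by
      intro a ha b hb hab
      have h1 := htmem a (by simpa using ha)
      have h2 := htmem b (by simpa using hb)
      exact hclq h1 h2 (fun h => hab (Subtype.ext h))
    have hcard := hclq'.card_le_chromaticNumber
    rw [htcard] at hcard
    have hlt : (G.degree x + 1 : ℕ) < k := by exact_mod_cast lt_of_le_of_lt hcard hu
    omega
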